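/- Let h : (0,1] → ℝ be defined by h(r) = (1 + log(1/r))^{1−γ} with 0 ≤ γ < 1. Then there exists a constant c > 0 such that for all n ≥ 2, ∫_0^1 exp(−n r (1 + log(1/r))^{1−γ}) dr ≤ c / (n (log n)^{1−γ}). -/

import Mathlib

open Real

lemma aux_int_exp_neg (k : ℝ) (hk : 0 < k) :
    (∫ r in (0:ℝ)..1, Real.exp (-(k * r))) ≤ 1 / k := by
  have h1 : (∫ r in (0:ℝ)..1, Real.exp (-(k * r)))
      = k⁻¹ • ∫ x in (0:ℝ)..k, Real.exp (-x) := by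
    have := intervalIntegral.integral_comp_mul_left (fun x => Real.exp (-x))
      (a := 0) (b := 1) (c := k) hk.ne'
    simpa using this
  have h2 : (∫ x in (0:ℝ)..k, Real.exp (-x)) = 1 - Real.exp (-k) := by
    rw [intervalIntegral.integral_comp_neg (fun x => Real.exp x)]
    simp [integral_exp]
  rw [h1, h2, smul_eq_mul, div_eq_inv_mul]
  have : 1 - Real.exp (-k) ≤ 1 := by
    have := Real.exp_pos (-k); linarith
  exact mul_le_mul_of_nonneg_left this (by positivity)

/-- Laplace-type estimate: for `0 ≤ γ < 1` there is `c > 0` such that for `n ≥ 2`,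
`∫_0^1 exp(−n r (1 + log(1/r))^{1−γ}) dr ≤ c / (n (log n)^{1−γ})`. -/
theorem stmt_6 (γ : ℝ) (hγ0 : 0 ≤ γ) (hγ1 : γ < 1) :
    ∃ c : ℝ, 0 < c ∧ ∀ n : ℕ, 2 ≤ n →
      (∫ r in (0 : ℝ)..1, Real.exp (-(n : ℝ) * r * (1 + Real.log (1 / r)) ^ (1 - γ)))
        ≤ c / ((n : ℝ) * Real.log n ^ (1 - γ)) := by
  refine ⟨300, by norm_num, ?_⟩
  intro n hn
  set N : ℝ := (n : ℝ) with hNdef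
  have hN2 : (2:ℝ) ≤ N := by
    simp only [hNdef]; exact_mod_cast hn
  have hN0 : (0:ℝ) < N := by linarith
  have hL : 0 < Real.log N := Real.log_pos (by linarith)
  have hE : (0:ℝ) < 1 - γ := by linarith
  have hE1 : 1 - γ ≤ 1 := by linarith
  set P : ℝ := Real.log N ^ (1 - γ) with hPdef
  have hP0 : 0 < P := Real.rpow_pos_of_pos hL _
  set a : ℝ := (1/2) * P with hadef
  have ha0 : 0 < a := by positivity
  set s : ℝ := Real.sqrt N with hsdef
  have hs0 : 0 < s := Real.sqrt_pos.2 hN0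
  have hs2 : s ^ 2 = N := Real.sq_sqrt hN0.le
  -- pointwise bound
  have key : ∀ r ∈ Set.Icc (0:ℝ) 1,
      Real.exp (-N * r * (1 + Real.log (1/r)) ^ (1-γ))
        ≤ Real.exp (-(N * a * r)) + Real.exp (-s) := by
    intro r hr
    obtain ⟨hr0, hr1⟩ := hr
    rcases eq_or_lt_of_le hr0 with h0 | h0
    · rw [← h0]
      simp [(Real.exp_pos (-s)).le]
    have hx1 : (1:ℝ) ≤ 1 + Real.log (1/r) := by
      have : 0 ≤ Real.log (1/r) := Real.log_nonneg (by
        rw [le_div_iff₀ h0]; linarith)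
      linarith
    have hX1 : (1:ℝ) ≤ (1 + Real.log (1/r)) ^ (1-γ) :=
      Real.one_le_rpow hx1 hE.le
    rcases le_or_gt r (1/s) with hrs | hrs
    · -- small r : exponent ≥ N a r
      have hs1r : s ≤ 1/r := by
        rw [le_div_iff₀ h0]
        have h' := (le_div_iff₀ hs0).1 hrs
        nlinarith
      have hlog : Real.log s ≤ Real.log (1/r) := Real.log_le_log hs0 hs1r
      have hlogs : Real.log s = Real.log N / 2 := Real.log_sqrt hN0.le
      have hXa : a ≤ (1 + Real.log (1/r)) ^ (1-γ) := by
        have h1 : (1/2) * Real.log N ≤ 1 + Real.log (1/r) := by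
          rw [hlogs] at hlog; linarith
        have h2 : ((1/2) * Real.log N) ^ (1-γ) ≤ (1 + Real.log (1/r)) ^ (1-γ) :=
          Real.rpow_le_rpow (by positivity) h1 hE.le
        have h3 : ((1/2) * Real.log N) ^ (1-γ) = (1/2:ℝ)^(1-γ) * P := by
          rw [hPdef, ← Real.mul_rpow (by norm_num) hL.le]
        have h4 : (1/2:ℝ) ≤ (1/2:ℝ)^(1-γ) := by
          have := Real.rpow_le_rpow_of_exponent_ge (by norm_num : (0:ℝ) < 1/2)
            (by norm_num) hE1
          simpa using this
        have : a ≤ (1/2:ℝ)^(1-γ) * P := by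
          rw [hadef]; nlinarith
        linarith [h3 ▸ this, h2]
      have hexp : -N * r * (1 + Real.log (1/r)) ^ (1-γ) ≤ -(N * a * r) := by
        have hNr : 0 ≤ N * r := mul_nonneg hN0.le hr0
        have := mul_le_mul_of_nonneg_left hXa hNr
        linarith
      have := Real.exp_le_exp.2 hexp
      have := (Real.exp_pos (-s)).le
      linarith
    · -- large r : exponent ≥ s
      have h' : 1 ≤ r * s := (div_le_iff₀ hs0).1 hrs.le
      have h1 : s ≤ N * r := by
        calc s = s * 1 := by ring
          _ ≤ s * (r * s) := by exact mul_le_mul_of_nonneg_left h' hs0.le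
          _ = s ^ 2 * r := by ring
          _ = N * r := by rw [hs2]
      have h2 : N * r ≤ N * r * (1 + Real.log (1/r)) ^ (1-γ) :=
        le_mul_of_one_le_right (mul_nonneg hN0.le h0.le) hX1
      have hexp : -N * r * (1 + Real.log (1/r)) ^ (1-γ) ≤ -s := by linarith
      have := Real.exp_le_exp.2 hexp
      have := (Real.exp_pos (-(N * a * r))).le
      linarith
  -- integrability
  have hmeas : Measurable fun r : ℝ =>
      Real.exp (-N * r * (1 + Real.log (1/r)) ^ (1-γ)) := by
    have m1 : Measurable fun r : ℝ => (1 + Real.log (1/r)) ^ (1-γ) :=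
      (Real.continuous_rpow_const hE.le).measurable.comp
        (measurable_const.add (Real.measurable_log.comp
          (measurable_const.div measurable_id)))
    exact Real.measurable_exp.comp (((measurable_const.mul measurable_id).mul m1))
  have hfi : IntervalIntegrable
      (fun r : ℝ => Real.exp (-N * r * (1 + Real.log (1/r)) ^ (1-γ)))
      MeasureTheory.volume 0 1 := by
    rw [intervalIntegrable_iff, Set.uIoc_of_le (by norm_num : (0:ℝ) ≤ 1)]
    have hconst : MeasureTheory.IntegrableOn (fun _ : ℝ => (1:ℝ))
        (Set.Ioc (0:ℝ) 1) MeasureTheory.volume :=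
      MeasureTheory.integrableOn_const (by simp [Real.volume_Ioc]) (by simp)
    apply MeasureTheory.Integrable.mono hconst hmeas.aestronglyMeasurable.restrict
    filter_upwards [MeasureTheory.ae_restrict_mem measurableSet_Ioc] with r hr
    obtain ⟨hr0, hr1⟩ := hr
    rw [Real.norm_eq_abs, Real.abs_exp, norm_one]
    rw [Real.exp_le_one_iff]
    have : 0 ≤ (1 + Real.log (1/r)) ^ (1-γ) := Real.rpow_nonneg (by
      have : 0 ≤ Real.log (1/r) := Real.log_nonneg (by
        rw [le_div_iff₀ hr0]; linarith)
      linarith) _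
    have h0 : 0 ≤ N * r * (1 + Real.log (1/r)) ^ (1-γ) :=
      mul_nonneg (mul_nonneg hN0.le hr0.le) this
    linarith
  have hg1 : IntervalIntegrable (fun r : ℝ => Real.exp (-(N * a * r)))
      MeasureTheory.volume 0 1 := (by fun_prop : Continuous _).intervalIntegrable 0 1
  have hg2 : IntervalIntegrable (fun _ : ℝ => Real.exp (-s))
      MeasureTheory.volume 0 1 := intervalIntegrable_const
  -- monotonicity
  have hmono := intervalIntegral.integral_mono_on (by norm_num : (0:ℝ) ≤ 1)
    hfi (hg1.add hg2) key
  have hsplit : (∫ r in (0:ℝ)..1, (Real.exp (-(N * a * r)) + Real.exp (-s)))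
      = (∫ r in (0:ℝ)..1, Real.exp (-(N * a * r))) + Real.exp (-s) := by
    rw [intervalIntegral.integral_add hg1 hg2]
    simp
  have hint1 : (∫ r in (0:ℝ)..1, Real.exp (-(N * a * r))) ≤ 1 / (N * a) := by
    have := aux_int_exp_neg (N * a) (by positivity)
    simpa [mul_assoc] using this
  -- exp(-s) ≤ 256 / N^2
  have hexp_s : Real.exp (-s) ≤ 256 / N^2 := by
    have h1 : s/4 ≤ Real.exp (s/4) := by
      have := Real.add_one_le_exp (s/4); linarith
    have h2 : (s/4)^4 ≤ (Real.exp (s/4))^4 :=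
      pow_le_pow_left₀ (by positivity) h1 4
    have h3 : (Real.exp (s/4))^4 = Real.exp s := by
      rw [← Real.exp_nat_mul]; norm_num; ring
    have h5 : (s/4)^4 = N^2/256 := by
      have h6 : s^4 = N^2 := by rw [show s^4 = (s^2)^2 by ring, hs2]
      rw [div_pow, h6]; norm_num
    have h4 : N^2 / 256 ≤ Real.exp s := by rw [← h3, ← h5]; exact h2
    rw [Real.exp_neg, div_eq_mul_inv]
    rw [show (256:ℝ) * (N^2)⁻¹ = (N^2/256)⁻¹ by field_simp]
    apply inv_anti₀ (by positivity) h4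
  -- P ≤ N
  have hPN : P ≤ N := by
    rcases le_or_gt (Real.log N) 1 with h | h
    · have : P ≤ 1 := Real.rpow_le_one hL.le h hE.le
      linarith
    · have h1 : P ≤ Real.log N ^ (1:ℝ) :=
        Real.rpow_le_rpow_of_exponent_le h.le hE1
      rw [Real.rpow_one] at h1
      have := Real.log_le_self hN0.le
      linarith
  -- finish
  have hfin : 1 / (N * a) + Real.exp (-s) ≤ 300 / (N * P) := by
    have e1 : 1 / (N * a) = 2 / (N * P) := by
      rw [hadef]; field_simp
    have e2 : 256 / N^2 ≤ 256 / (N * P) := by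
      apply div_le_div_of_nonneg_left (by norm_num) (by positivity)
      nlinarith
    have e3 : 2 / (N * P) + 256 / (N * P) ≤ 300 / (N * P) := by
      rw [← add_div]
      apply div_le_div_of_nonneg_right ?_ (by positivity)
      norm_num
    rw [e1] at hint1
    linarith
  calc (∫ r in (0:ℝ)..1, Real.exp (-N * r * (1 + Real.log (1/r)) ^ (1-γ)))
      ≤ (∫ r in (0:ℝ)..1, Real.exp (-(N * a * r))) + Real.exp (-s) := by
        rw [← hsplit]; exact hmono
    _ ≤ 1 / (N * a) + Real.exp (-s) := by linarith
    _ ≤ 300 / (N * P) := hfin
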